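/- Let H be a weak bialgebra and g ∈ H a group-like element. Then the map β: H_s → H_s ⊗ H, x ↦ x_0 ⊗ (g x_1), where x ↦ x_0⊗x_1 denotes the standard coaction x ↦ x'⊗x'' of H on H_s, defines a right H-comodule structure on the vector space H_s (denoted H_s^g). -/

import Mathlib

open TensorProduct

noncomputable section

/-- The data of a (candidate) weak bialgebra over `k`: an associative unital
multiplication `mul` with unit `one`, a comultiplication `comul` and a counit `counit`. -/
structure WBData (k : Type) [CommRing k] (H : Type) [AddCommGroup H] [Module k H] where
  mul : H →ₗ[k] H →ₗ[k] H
  one : H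
  comul : H →ₗ[k] H ⊗[k] H
  counit : H →ₗ[k] k

namespace WBData

variable {k : Type} [CommRing k] {H : Type} [AddCommGroup H] [Module k H] (W : WBData k H)

/-- Multiplication as a map on the tensor product. -/
def mulT : H ⊗[k] H →ₗ[k] H := TensorProduct.lift W.mul

/-- The induced multiplication on `H ⊗ H`: `(a⊗b)·(c⊗d) = (ac)⊗(bd)`. -/
def mul₂ (x y : H ⊗[k] H) : H ⊗[k] H :=
  TensorProduct.map W.mulT W.mulT (TensorProduct.tensorTensorTensorComm k H H H H (x ⊗ₜ[k] y))

/-- The source counital map `ε_s(h) = 1' ε(h 1'')`. -/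
def εsMap : H →ₗ[k] H :=
  (TensorProduct.lid k H).toLinearMap
    ∘ₗ LinearMap.rTensor H (W.counit ∘ₗ W.mulT)
    ∘ₗ (TensorProduct.assoc k H H H).symm.toLinearMap
    ∘ₗ (TensorProduct.mk k H (H ⊗[k] H)).flip ((TensorProduct.comm k H H) (W.comul W.one))

/-- The target counital map `ε_t(h) = ε(1' h) 1''`. -/
def εtMap : H →ₗ[k] H :=
  (TensorProduct.rid k H).toLinearMap
    ∘ₗ LinearMap.lTensor H (W.counit ∘ₗ W.mulT)
    ∘ₗ (TensorProduct.assoc k H H H).toLinearMap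
    ∘ₗ (TensorProduct.mk k (H ⊗[k] H) H) ((TensorProduct.comm k H H) (W.comul W.one))

/-- The map `\bar ε_s(h) = 1' ε(1'' h)`. -/
def barεsMap : H →ₗ[k] H :=
  (TensorProduct.rid k H).toLinearMap
    ∘ₗ LinearMap.lTensor H (W.counit ∘ₗ W.mulT)
    ∘ₗ (TensorProduct.assoc k H H H).toLinearMap
    ∘ₗ (TensorProduct.mk k (H ⊗[k] H) H) (W.comul W.one)

/-- The source base algebra `H_s = ε_s(H)`. -/
def Hs : Submodule k H := LinearMap.range W.εsMap

/-- The target base algebra `H_t = ε_t(H)`. -/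
def Ht : Submodule k H := LinearMap.range W.εtMap

/-- The axioms of a weak bialgebra for the data `W`. -/
structure IsWeakBialgebra : Prop where
  mul_assoc : ∀ x y z : H, W.mul (W.mul x y) z = W.mul x (W.mul y z)
  one_mul : ∀ x : H, W.mul W.one x = x
  mul_one : ∀ x : H, W.mul x W.one = x
  coassoc : ∀ x : H,
    (TensorProduct.assoc k H H H) (LinearMap.rTensor H W.comul (W.comul x)) =
      LinearMap.lTensor H W.comul (W.comul x)
  counit_left : ∀ x : H,
    (TensorProduct.lid k H) (LinearMap.rTensor H W.counit (W.comul x)) = x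
  counit_right : ∀ x : H,
    (TensorProduct.rid k H) (LinearMap.lTensor H W.counit (W.comul x)) = x
  comul_mul : ∀ x y : H, W.comul (W.mul x y) = W.mul₂ (W.comul x) (W.comul y)
  counit_mul : ∀ x y z : H, W.counit (W.mul (W.mul x y) z) =
    (LinearMap.mul' k k)
      (TensorProduct.map (W.counit ∘ₗ W.mul x) (W.counit ∘ₗ W.mul.flip z) (W.comul y))
  counit_mul_op : ∀ x y z : H, W.counit (W.mul (W.mul x y) z) =
    (LinearMap.mul' k k)
      (TensorProduct.map (W.counit ∘ₗ W.mul x) (W.counit ∘ₗ W.mul.flip z)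
        ((TensorProduct.comm k H H) (W.comul y)))
  comul_one : LinearMap.rTensor H W.comul (W.comul W.one) =
    (LinearMap.rTensor H (TensorProduct.comm k H H).toLinearMap)
      ((TensorProduct.assoc k H H H).symm
        ((TensorProduct.map W.mulT LinearMap.id)
          ((TensorProduct.tensorTensorTensorComm k H H H H)
            (((TensorProduct.comm k H H) (W.comul W.one)) ⊗ₜ[k] (W.comul W.one)))))
  comul_one_op : LinearMap.rTensor H W.comul (W.comul W.one) =
    (LinearMap.rTensor H (TensorProduct.comm k H H).toLinearMap)
      ((TensorProduct.assoc k H H H).symm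
        ((TensorProduct.map (W.mulT ∘ₗ (TensorProduct.comm k H H).toLinearMap) LinearMap.id)
          ((TensorProduct.tensorTensorTensorComm k H H H H)
            (((TensorProduct.comm k H H) (W.comul W.one)) ⊗ₜ[k] (W.comul W.one)))))

/-- `g` is right group-like: `Δ g = (g⊗g)·Δ1` and `ε_s(g) = 1`. -/
def IsRightGroupLike (g : H) : Prop :=
  W.comul g = W.mul₂ (g ⊗ₜ[k] g) (W.comul W.one) ∧ W.εsMap g = W.one

/-- `g` is left group-like: `Δ g = Δ1·(g⊗g)` and `ε_t(g) = 1`. -/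
def IsLeftGroupLike (g : H) : Prop :=
  W.comul g = W.mul₂ (W.comul W.one) (g ⊗ₜ[k] g) ∧ W.εtMap g = W.one

/-- `g` is group-like if it is both right and left group-like. -/
def IsGroupLike (g : H) : Prop := W.IsRightGroupLike g ∧ W.IsLeftGroupLike g

/-- The coaction `x ↦ x' ⊗ (g x'')` of `H` on (the ambient space of) `H_s`,
defining the comodule `H_s^g` for a group-like `g`. -/
def βg (g : H) : H →ₗ[k] H ⊗[k] H :=
  LinearMap.lTensor H (W.mul g) ∘ₗ W.comul

/-- A coaction `β : V → V ⊗ H` is a (right) comodule structure if it is coassociative and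
counital. -/
def IsCoaction {V : Type} [AddCommGroup V] [Module k V] (β : V →ₗ[k] V ⊗[k] H) : Prop :=
  (∀ v : V, (TensorProduct.assoc k V H H) (LinearMap.rTensor H β (β v)) =
      LinearMap.lTensor V W.comul (β v)) ∧
  (∀ v : V, (TensorProduct.rid k V) (LinearMap.lTensor V W.counit (β v)) = v)

/-- The truncation idempotent `P_{V,W}(v⊗w) = (v₀⊗w₀) ε(v₁w₁)` of two comodules, expressed
on the ambient tensor product. -/
def truncP {V U : Type} [AddCommGroup V] [Module k V] [AddCommGroup U] [Module k U]
    (βa : V →ₗ[k] V ⊗[k] H) (βb : U →ₗ[k] U ⊗[k] H) : V ⊗[k] U →ₗ[k] V ⊗[k] U :=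
  (TensorProduct.rid k (V ⊗[k] U)).toLinearMap
    ∘ₗ LinearMap.lTensor (V ⊗[k] U) (W.counit ∘ₗ W.mulT)
    ∘ₗ (TensorProduct.tensorTensorTensorComm k V H U H).toLinearMap
    ∘ₗ TensorProduct.map βa βb

/-- The coaction `v⊗w ↦ (v₀⊗w₀)⊗(v₁w₁)` on the (truncated) tensor product of two comodules,
expressed on the ambient tensor product. -/
def βtens {V U : Type} [AddCommGroup V] [Module k V] [AddCommGroup U] [Module k U]
    (βa : V →ₗ[k] V ⊗[k] H) (βb : U →ₗ[k] U ⊗[k] H) : V ⊗[k] U →ₗ[k] (V ⊗[k] U) ⊗[k] H :=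
  LinearMap.lTensor (V ⊗[k] U) W.mulT
    ∘ₗ (TensorProduct.tensorTensorTensorComm k V H U H).toLinearMap
    ∘ₗ TensorProduct.map βa βb

/-- The two-sided ideal (with respect to `W.mul`) generated by a set `s`. -/
def twoSidedIdeal (s : Set H) : Submodule k H :=
  sInf {J : Submodule k H | s ⊆ J ∧ ∀ x : H, ∀ y ∈ J, W.mul x y ∈ J ∧ W.mul y x ∈ J}

/-- Powers of an element with respect to `W.mul`. -/
def powW (g : H) : ℕ → H
  | 0 => W.one
  | n + 1 => W.mul (powW g n) g

/-- An antipode for `W`, making it a weak Hopf algebra. -/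
def IsAntipode (S : H →ₗ[k] H) : Prop :=
  (∀ x : H, W.mulT (LinearMap.lTensor H S (W.comul x)) = W.εtMap x) ∧
  (∀ x : H, W.mulT (LinearMap.rTensor H S (W.comul x)) = W.εsMap x) ∧
  (∀ x : H, W.mulT (LinearMap.lTensor H S
      (LinearMap.rTensor H (W.mulT ∘ₗ LinearMap.rTensor H S)
        (LinearMap.rTensor H W.comul (W.comul x)))) = S x)

end WBData

/-- A homomorphism of weak bialgebras: a linear map which is a homomorphism of unital
algebras and of counital coalgebras. -/
def IsWBHom {k : Type} [CommRing k] {H H' : Type} [AddCommGroup H] [Module k H]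
    [AddCommGroup H'] [Module k H'] (W : WBData k H) (W' : WBData k H')
    (f : H →ₗ[k] H') : Prop :=
  (∀ x y : H, f (W.mul x y) = W'.mul (f x) (f y)) ∧
  f W.one = W'.one ∧
  (∀ x : H, W'.comul (f x) = TensorProduct.map f f (W.comul x)) ∧
  (∀ x : H, W'.counit (f x) = W.counit x)

end
noncomputable section
namespace WBData
open TensorProduct Finset
variable {k : Type} [CommRing k] {H : Type} [AddCommGroup H] [Module k H] (W : WBData k H)

lemma mulT_tmul (a b : H) : W.mulT (a ⊗ₜ[k] b) = W.mul a b := rfl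

lemma mul₂_tmul (a b c d : H) :
    W.mul₂ (a ⊗ₜ[k] b) (c ⊗ₜ[k] d) = W.mul a c ⊗ₜ[k] W.mul b d := by
  simp [mul₂, tensorTensorTensorComm_tmul, mulT_tmul]

lemma mul₂_add_left (x x' y : H ⊗[k] H) :
    W.mul₂ (x + x') y = W.mul₂ x y + W.mul₂ x' y := by
  simp [mul₂, add_tmul]

lemma mul₂_add_right (x y y' : H ⊗[k] H) :
    W.mul₂ x (y + y') = W.mul₂ x y + W.mul₂ x y' := by
  simp [mul₂, tmul_add]

lemma mul₂_zero_left (y : H ⊗[k] H) : W.mul₂ 0 y = 0 := by simp [mul₂, zero_tmul]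

lemma mul₂_zero_right (x : H ⊗[k] H) : W.mul₂ x 0 = 0 := by simp [mul₂, tmul_zero]

lemma mul₂_smul_left (c : k) (x y : H ⊗[k] H) : W.mul₂ (c • x) y = c • W.mul₂ x y := by
  simp [mul₂, ← smul_tmul']

lemma mul₂_assoc (hW : W.IsWeakBialgebra) (x y z : H ⊗[k] H) :
    W.mul₂ (W.mul₂ x y) z = W.mul₂ x (W.mul₂ y z) := by
  induction x using TensorProduct.induction_on with
  | zero => simp [mul₂_zero_left]
  | add x x' hx hx' => simp [mul₂_add_left, hx, hx']
  | tmul a b =>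
    induction y using TensorProduct.induction_on with
    | zero => simp [mul₂_zero_left, mul₂_zero_right]
    | add y y' hy hy' => simp [mul₂_add_left, mul₂_add_right, hy, hy']
    | tmul c d =>
      induction z using TensorProduct.induction_on with
      | zero => simp [mul₂_zero_right]
      | add z z' hz hz' => simp [mul₂_add_right, hz, hz']
      | tmul e f => simp [mul₂_tmul, hW.mul_assoc]

/-- multiplication by `g ⊗ g` on the left is `map (mul g) (mul g)`. -/
lemma mul₂_tmul_left (a b : H) (t : H ⊗[k] H) :
    W.mul₂ (a ⊗ₜ[k] b) t = TensorProduct.map (W.mul a) (W.mul b) t := by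
  induction t using TensorProduct.induction_on with
  | zero => simp [mul₂_zero_right]
  | add t t' ht ht' => simp [mul₂_add_right, ht, ht']
  | tmul c d => simp [mul₂_tmul]

lemma mul₂_one_left (hW : W.IsWeakBialgebra) (h : H) : W.mul₂ (W.comul W.one) (W.comul h) = W.comul h := by
  conv_rhs => rw [← hW.one_mul h, hW.comul_mul]

/-- For group-like `g`, `Δ(g h) = (g ⊗ g) Δ h`. -/
lemma comul_mul_grouplike (hW : W.IsWeakBialgebra) (g : H) (hg : W.IsGroupLike g) (h : H) :
    W.comul (W.mul g h) = TensorProduct.map (W.mul g) (W.mul g) (W.comul h) := by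
  rw [hW.comul_mul, hg.1.1, mul₂_assoc W hW, mul₂_one_left W hW, mul₂_tmul_left]

lemma rTensor_beta (g : H) (t : H ⊗[k] H) :
    LinearMap.rTensor H (W.βg g) (LinearMap.lTensor H (W.mul g) t)
      = TensorProduct.map (TensorProduct.map LinearMap.id (W.mul g)) (W.mul g)
          (LinearMap.rTensor H W.comul t) := by
  induction t using TensorProduct.induction_on with
  | zero => simp
  | add a b ha hb => simp [ha, hb]
  | tmul a b => simp [βg, LinearMap.lTensor]

lemma map_comul_beta (hW : W.IsWeakBialgebra) {g : H} (hg : W.IsGroupLike g) (t : H ⊗[k] H) :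
    TensorProduct.map LinearMap.id (TensorProduct.map (W.mul g) (W.mul g))
        (LinearMap.lTensor H W.comul t)
      = LinearMap.lTensor H W.comul (LinearMap.lTensor H (W.mul g) t) := by
  induction t using TensorProduct.induction_on with
  | zero => simp
  | add a b ha hb => simp [ha, hb]
  | tmul a b => simp [comul_mul_grouplike W hW g hg b]

lemma beta_coassoc (hW : W.IsWeakBialgebra) {g : H} (hg : W.IsGroupLike g) (x : H) :
    (TensorProduct.assoc k H H H) (LinearMap.rTensor H (W.βg g) (W.βg g x)) =
      LinearMap.lTensor H W.comul (W.βg g x) := by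
  have h0 : W.βg g x = LinearMap.lTensor H (W.mul g) (W.comul x) := rfl
  rw [h0, rTensor_beta, ← TensorProduct.map_map_assoc, hW.coassoc,
    map_comul_beta W hW hg, ← h0]

lemma εsMap_apply (S : Finset (H × H)) (hS : W.comul W.one = ∑ p ∈ S, p.1 ⊗ₜ[k] p.2)
    (h : H) : W.εsMap h = ∑ p ∈ S, W.counit (W.mul h p.2) • p.1 := by
  simp [εsMap, hS, tmul_sum, sum_tmul, map_sum, mulT_tmul]

lemma counit_mul_one_right (hW : W.IsWeakBialgebra) (S : Finset (H × H))
    (hS : W.comul W.one = ∑ p ∈ S, p.1 ⊗ₜ[k] p.2) (x z : H) :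
    W.counit (W.mul x z) = ∑ p ∈ S, W.counit (W.mul x p.2) * W.counit (W.mul p.1 z) := by
  have h := hW.counit_mul_op x W.one z
  rw [hW.mul_one] at h
  rw [h, hS]
  simp [map_sum, mulT_tmul]

lemma εs_mul (hW : W.IsWeakBialgebra) (h x : H) :
    W.εsMap (W.mul (W.εsMap h) x) = W.εsMap (W.mul h x) := by
  obtain ⟨S, hS⟩ := TensorProduct.exists_finset (W.comul W.one)
  rw [εsMap_apply W S hS, εsMap_apply W S hS (W.mul h x)]
  refine Finset.sum_congr rfl fun b _ => ?_
  congr 1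
  rw [hW.mul_assoc, hW.mul_assoc, εsMap_apply W S hS h]
  simp only [map_sum, LinearMap.sum_apply, map_smul, LinearMap.smul_apply, smul_eq_mul]
  exact (counit_mul_one_right W hW S hS h (W.mul x b.2)).symm

lemma εs_idem (hW : W.IsWeakBialgebra) (h : H) : W.εsMap (W.εsMap h) = W.εsMap h := by
  have := εs_mul W hW h W.one
  rwa [hW.mul_one, hW.mul_one] at this

lemma comul_one_rep (hW : W.IsWeakBialgebra) (S : Finset (H × H))
    (hS : W.comul W.one = ∑ p ∈ S, p.1 ⊗ₜ[k] p.2) :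
    LinearMap.rTensor H W.comul (W.comul W.one)
      = ∑ p ∈ S, ∑ q ∈ S, (p.1 ⊗ₜ[k] W.mul p.2 q.1) ⊗ₜ[k] q.2 := by
  rw [hW.comul_one]
  conv_lhs => rw [hS]
  simp [sum_tmul, tmul_sum, map_sum, mulT_tmul, tensorTensorTensorComm_tmul]
  exact Finset.sum_comm

lemma comul_one_op_rep (hW : W.IsWeakBialgebra) (S : Finset (H × H))
    (hS : W.comul W.one = ∑ p ∈ S, p.1 ⊗ₜ[k] p.2) :
    LinearMap.rTensor H W.comul (W.comul W.one)
      = ∑ p ∈ S, ∑ q ∈ S, (p.1 ⊗ₜ[k] W.mul q.1 p.2) ⊗ₜ[k] q.2 := by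
  rw [hW.comul_one_op]
  conv_lhs => rw [hS]
  simp [sum_tmul, tmul_sum, map_sum, mulT_tmul, tensorTensorTensorComm_tmul]
  exact Finset.sum_comm

lemma comul_εs (hW : W.IsWeakBialgebra) (S : Finset (H × H))
    (hS : W.comul W.one = ∑ p ∈ S, p.1 ⊗ₜ[k] p.2) (h : H) :
    W.comul (W.εsMap h) = ∑ p ∈ S, p.1 ⊗ₜ[k] W.mul p.2 (W.εsMap h) := by
  have key : ∑ p ∈ S, W.counit (W.mul h p.2) • W.comul p.1
      = ∑ p ∈ S, ∑ q ∈ S, W.counit (W.mul h q.2) • (p.1 ⊗ₜ[k] W.mul p.2 q.1) := by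
    have hc := congrArg (fun t => (TensorProduct.rid k (H ⊗[k] H))
        (LinearMap.lTensor (H ⊗[k] H) (W.counit ∘ₗ W.mul h) t)) (comul_one_rep W hW S hS)
    rw [hS] at hc
    simpa [map_sum, mulT_tmul] using hc
  calc W.comul (W.εsMap h) = ∑ p ∈ S, W.counit (W.mul h p.2) • W.comul p.1 := by
        rw [εsMap_apply W S hS h]; simp [map_sum]
    _ = ∑ p ∈ S, ∑ q ∈ S, W.counit (W.mul h q.2) • (p.1 ⊗ₜ[k] W.mul p.2 q.1) := key
    _ = ∑ p ∈ S, p.1 ⊗ₜ[k] W.mul p.2 (W.εsMap h) := by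
        rw [εsMap_apply W S hS h]
        simp [map_sum, tmul_sum, tmul_smul]

lemma comul_εs' (hW : W.IsWeakBialgebra) (S : Finset (H × H))
    (hS : W.comul W.one = ∑ p ∈ S, p.1 ⊗ₜ[k] p.2) (h : H) :
    W.comul (W.εsMap h) = ∑ p ∈ S, p.1 ⊗ₜ[k] W.mul (W.εsMap h) p.2 := by
  have key : ∑ p ∈ S, W.counit (W.mul h p.2) • W.comul p.1
      = ∑ p ∈ S, ∑ q ∈ S, W.counit (W.mul h q.2) • (p.1 ⊗ₜ[k] W.mul q.1 p.2) := by
    have hc := congrArg (fun t => (TensorProduct.rid k (H ⊗[k] H))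
        (LinearMap.lTensor (H ⊗[k] H) (W.counit ∘ₗ W.mul h) t)) (comul_one_op_rep W hW S hS)
    rw [hS] at hc
    simpa [map_sum, mulT_tmul] using hc
  calc W.comul (W.εsMap h) = ∑ p ∈ S, W.counit (W.mul h p.2) • W.comul p.1 := by
        rw [εsMap_apply W S hS h]; simp [map_sum]
    _ = ∑ p ∈ S, ∑ q ∈ S, W.counit (W.mul h q.2) • (p.1 ⊗ₜ[k] W.mul q.1 p.2) := key
    _ = ∑ p ∈ S, p.1 ⊗ₜ[k] W.mul (W.εsMap h) p.2 := by
        rw [εsMap_apply W S hS h]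
        simp [map_sum, tmul_sum, tmul_smul, smul_tmul']

lemma rTensor_εs_comul_one (hW : W.IsWeakBialgebra) :
    LinearMap.rTensor H W.εsMap (W.comul W.one) = W.comul W.one := by
  obtain ⟨S, hS⟩ := TensorProduct.exists_finset (W.comul W.one)
  have hc := congrArg (⇑(LinearMap.rTensor H
      ((TensorProduct.rid k H).toLinearMap ∘ₗ LinearMap.lTensor H W.counit)))
      (comul_one_op_rep W hW S hS)
  have hL : (LinearMap.rTensor H
      ((TensorProduct.rid k H).toLinearMap ∘ₗ LinearMap.lTensor H W.counit))
      (LinearMap.rTensor H W.comul (W.comul W.one)) = W.comul W.one := by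
    rw [hS]
    simp only [map_sum, LinearMap.rTensor_tmul, LinearMap.comp_apply, LinearEquiv.coe_coe]
    exact Finset.sum_congr rfl fun p _ => by rw [hW.counit_right p.1]
  rw [hL] at hc
  simp only [map_sum, LinearMap.rTensor_tmul, LinearMap.comp_apply, LinearEquiv.coe_coe,
    LinearMap.lTensor_tmul, TensorProduct.rid_tmul] at hc
  calc LinearMap.rTensor H W.εsMap (W.comul W.one)
      = ∑ q ∈ S, ∑ p ∈ S, (W.counit (W.mul q.1 p.2) • p.1) ⊗ₜ[k] q.2 := by
        conv_lhs => rw [hS]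
        simp only [map_sum, LinearMap.rTensor_tmul]
        refine Finset.sum_congr rfl fun q _ => ?_
        rw [εsMap_apply W S hS q.1, sum_tmul]
    _ = ∑ p ∈ S, ∑ q ∈ S, (W.counit (W.mul q.1 p.2) • p.1) ⊗ₜ[k] q.2 := Finset.sum_comm
    _ = W.comul W.one := hc.symm

lemma comul_εs_eq (hW : W.IsWeakBialgebra) (h : H) :
    W.comul (W.εsMap h)
      = LinearMap.lTensor H (W.mul.flip (W.εsMap h)) (W.comul W.one) := by
  obtain ⟨S, hS⟩ := TensorProduct.exists_finset (W.comul W.one)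
  rw [comul_εs W hW S hS h]
  conv_rhs => rw [hS]
  simp [map_sum]

lemma rTensor_εs_comul (hW : W.IsWeakBialgebra) (h : H) :
    LinearMap.rTensor H W.εsMap (W.comul (W.εsMap h)) = W.comul (W.εsMap h) := by
  rw [comul_εs_eq W hW h, ← LinearMap.comp_apply, LinearMap.rTensor_comp_lTensor,
    ← LinearMap.lTensor_comp_rTensor, LinearMap.comp_apply, rTensor_εs_comul_one W hW,
    ← comul_εs_eq W hW h]

lemma rTensor_εs_beta (hW : W.IsWeakBialgebra) (g h : H) :
    LinearMap.rTensor H W.εsMap (W.βg g (W.εsMap h)) = W.βg g (W.εsMap h) := by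
  show LinearMap.rTensor H W.εsMap
      (LinearMap.lTensor H (W.mul g) (W.comul (W.εsMap h))) = _
  rw [← LinearMap.comp_apply, LinearMap.rTensor_comp_lTensor,
    ← LinearMap.lTensor_comp_rTensor, LinearMap.comp_apply, rTensor_εs_comul W hW h]
  rfl

lemma beta_counital (hW : W.IsWeakBialgebra) {g : H} (hg : W.IsGroupLike g) (h : H) :
    (TensorProduct.rid k H) (LinearMap.lTensor H W.counit (W.βg g (W.εsMap h)))
      = W.εsMap h := by
  obtain ⟨S, hS⟩ := TensorProduct.exists_finset (W.comul W.one)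
  have h0 : W.βg g (W.εsMap h)
      = LinearMap.lTensor H (W.mul g) (W.comul (W.εsMap h)) := rfl
  rw [h0, comul_εs' W hW S hS h]
  simp only [map_sum, LinearMap.lTensor_tmul, TensorProduct.rid_tmul]
  have : ∀ p ∈ S, W.counit (W.mul g (W.mul (W.εsMap h) p.2)) • p.1
      = W.counit (W.mul (W.mul g (W.εsMap h)) p.2) • p.1 := fun p _ => by
    rw [hW.mul_assoc]
  rw [Finset.sum_congr rfl this, ← εsMap_apply W S hS (W.mul g (W.εsMap h)),
    ← εs_mul W hW g (W.εsMap h), hg.1.2, hW.one_mul, εs_idem W hW]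

end WBData
end

/-- For a weak bialgebra `H` and a group-like `g ∈ H`, the map
`x ↦ x₀ ⊗ (g x₁)` (i.e. `x ↦ x' ⊗ (g x'')`) defines a right `H`-comodule structure on the
vector space `H_s`, denoted `H_s^g`: it maps `H_s` into `H_s ⊗ H`, and is coassociative and
counital on `H_s`. -/
theorem grouplike_comodule_structure {k : Type} [Field k] {H : Type} [AddCommGroup H]
    [Module k H] (W : WBData k H) (hW : W.IsWeakBialgebra) (g : H) (hg : W.IsGroupLike g) :
    (∀ x ∈ W.Hs, W.βg g x ∈ LinearMap.range (LinearMap.rTensor H (W.Hs).subtype)) ∧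
    (∀ x ∈ W.Hs, (TensorProduct.assoc k H H H)
        (LinearMap.rTensor H (W.βg g) (W.βg g x)) =
      LinearMap.lTensor H W.comul (W.βg g x)) ∧
    (∀ x ∈ W.Hs, (TensorProduct.rid k H) (LinearMap.lTensor H W.counit (W.βg g x)) = x) := by
  refine ⟨?_, ?_, ?_⟩ <;> intro x hx <;>
    obtain ⟨h, rfl⟩ := (LinearMap.mem_range).mp hx
  · refine ⟨LinearMap.rTensor H
      (W.εsMap.codRestrict W.Hs fun a => show W.εsMap a ∈ W.Hs from LinearMap.mem_range_self _ a)
      (W.βg g (W.εsMap h)), ?_⟩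
    rw [← LinearMap.comp_apply, ← LinearMap.rTensor_comp,
      LinearMap.subtype_comp_codRestrict, W.rTensor_εs_beta hW g h]
  · exact W.beta_coassoc hW hg (W.εsMap h)
  · exact W.beta_counital hW hg h
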